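/- arXiv:0802.0021 — 3 statements merged into one kernel-verified Lean document; each statement's English description precedes it below -/
import Mathlib

section
/- Equidispersion of Poisson systems: let N be a random variable taking values in nonnegative integers with P(N = 1) = μδ + o(δ), P(N = 0) = 1 - μδ + o(δ), and tail bound P(N > k) ≤ F̄(k, νδ) for all k ≥ 0, where F̄(k, λ) = Σ_{j>k} λ^j e^{-λ}/j! is the Poisson tail. Then E[N] = μδ + o(δ) and Var(N) = μδ + o(δ) as δ → 0. -/
open Filter Asymptotics

lemma aux_poisson_tail (lam : ℝ) (hlam : 0 ≤ lam) (k : ℕ) :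
    (∑' j : ℕ, lam ^ (k + 1 + j) * Real.exp (-lam) / Nat.factorial (k + 1 + j))
      ≤ lam ^ (k + 1) / Nat.factorial (k + 1) := by
  set a : ℝ := lam ^ (k + 1) / Nat.factorial (k + 1) with ha
  have ha0 : 0 ≤ a := by positivity
  have hterm : ∀ j : ℕ, lam ^ (k + 1 + j) * Real.exp (-lam) / Nat.factorial (k + 1 + j)
      ≤ a * (lam ^ j / Nat.factorial j) * Real.exp (-lam) := by
    intro j
    have hfac : ((Nat.factorial (k+1) : ℝ) * Nat.factorial j) ≤ (Nat.factorial (k+1+j) : ℝ) := by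
      exact_mod_cast Nat.le_of_dvd (Nat.factorial_pos _)
        (Nat.factorial_mul_factorial_dvd_factorial_add _ _)
    have h1 : lam ^ (k + 1 + j) * Real.exp (-lam) / (Nat.factorial (k + 1 + j) : ℝ)
        ≤ lam ^ (k + 1 + j) * Real.exp (-lam) / ((Nat.factorial (k+1) : ℝ) * Nat.factorial j) := by
      apply div_le_div_of_nonneg_left (by positivity) (by positivity) hfac
    calc lam ^ (k + 1 + j) * Real.exp (-lam) / (Nat.factorial (k + 1 + j) : ℝ)
        ≤ lam ^ (k + 1 + j) * Real.exp (-lam) / ((Nat.factorial (k+1) : ℝ) * Nat.factorial j) := h1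
      _ = a * (lam ^ j / Nat.factorial j) * Real.exp (-lam) := by
          rw [pow_add, ha]; field_simp; try ring
  have hsum2 : Summable (fun j : ℕ => a * (lam ^ j / Nat.factorial j) * Real.exp (-lam)) :=
    ((Real.summable_pow_div_factorial lam).mul_left a).mul_right _
  have hsum1 : Summable (fun j : ℕ =>
      lam ^ (k + 1 + j) * Real.exp (-lam) / Nat.factorial (k + 1 + j)) :=
    Summable.of_nonneg_of_le (fun j => by positivity) hterm hsum2
  have hexp : (∑' j : ℕ, lam ^ j / Nat.factorial j) ≤ Real.exp lam :=
    Real.tsum_le_of_sum_range_le (fun n => by positivity)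
      (fun n => Real.sum_le_exp_of_nonneg hlam n)
  calc (∑' j : ℕ, lam ^ (k + 1 + j) * Real.exp (-lam) / Nat.factorial (k + 1 + j))
      ≤ ∑' j : ℕ, a * (lam ^ j / Nat.factorial j) * Real.exp (-lam) :=
        Summable.tsum_le_tsum hterm hsum1 hsum2
    _ = a * (∑' j : ℕ, lam ^ j / Nat.factorial j) * Real.exp (-lam) := by
        rw [tsum_mul_right, tsum_mul_left]
    _ ≤ a * Real.exp lam * Real.exp (-lam) := by
        have he : (0:ℝ) ≤ Real.exp (-lam) := (Real.exp_pos _).le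
        have := mul_le_mul_of_nonneg_left hexp ha0
        nlinarith
    _ = a := by rw [mul_assoc, ← Real.exp_add]; simp

/-- Equidispersion of Poisson systems (Appendix B): if a family `N(δ)` of
nonnegative-integer-valued random variables, with distribution `p δ`, satisfies
`P(N = 1) = μδ + o(δ)`, `P(N = 0) = 1 - μδ + o(δ)` and the Poisson tail bound
`P(N > k) ≤ F̄(k, νδ)`, then `E[N] = μδ + o(δ)` and `Var(N) = μδ + o(δ)` as `δ → 0⁺`. -/
theorem poisson_system_equidispersion (μ ν : ℝ) (hμ : 0 < μ) (hν : 0 < ν) (hμν : μ ≤ ν)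
    (p : ℝ → ℕ → ℝ)
    (hnonneg : ∀ δ, 0 < δ → ∀ n, 0 ≤ p δ n)
    (hsum : ∀ δ, 0 < δ → (∑' n : ℕ, p δ n) = 1)
    (hone : (fun δ => p δ 1 - μ * δ) =o[nhdsWithin 0 (Set.Ioi 0)] (fun δ : ℝ => δ))
    (hzero : (fun δ => p δ 0 - (1 - μ * δ)) =o[nhdsWithin 0 (Set.Ioi 0)] (fun δ : ℝ => δ))
    (htail : ∀ δ, 0 < δ → ∀ k : ℕ,
      (∑' j : ℕ, p δ (k + 1 + j)) ≤
        ∑' j : ℕ, (ν * δ) ^ (k + 1 + j) * Real.exp (-(ν * δ)) / Nat.factorial (k + 1 + j)) :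
    ((fun δ => (∑' n : ℕ, (n : ℝ) * p δ n) - μ * δ) =o[nhdsWithin 0 (Set.Ioi 0)]
        (fun δ : ℝ => δ)) ∧
    ((fun δ => ((∑' n : ℕ, (n : ℝ) ^ 2 * p δ n) - (∑' n : ℕ, (n : ℝ) * p δ n) ^ 2) - μ * δ)
        =o[nhdsWithin 0 (Set.Ioi 0)] (fun δ : ℝ => δ)) := by
  set l := nhdsWithin (0:ℝ) (Set.Ioi 0) with hl
  -- summability of p δ
  have hsummp : ∀ δ, 0 < δ → Summable (p δ) := by
    intro δ hδ
    by_contra h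
    have h1 := hsum δ hδ
    rw [tsum_eq_zero_of_not_summable h] at h1
    norm_num at h1
  -- pointwise Poisson bound
  have hpn : ∀ δ, 0 < δ → ∀ n : ℕ, p δ (n+1) ≤ (ν*δ)^(n+1) / Nat.factorial (n+1) := by
    intro δ hδ n
    have hs : Summable (fun j : ℕ => p δ (n + 1 + j)) :=
      ((summable_nat_add_iff (n+1)).2 (hsummp δ hδ)).congr (fun j => by rw [Nat.add_comm])
    have h0 : p δ (n+1) ≤ ∑' j : ℕ, p δ (n + 1 + j) := by
      have := Summable.le_tsum hs 0 (fun j _ => hnonneg δ hδ _)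
      simpa using this
    exact h0.trans ((htail δ hδ n).trans (aux_poisson_tail (ν*δ) (by positivity) n))
  -- n² ≤ 4^n
  have hcast : ∀ n : ℕ, ((n:ℝ))^2 ≤ 4^n := by
    intro n
    have h1 : (n:ℝ) ≤ 2^n := by exact_mod_cast (Nat.lt_two_pow_self (n := n)).le
    calc (n:ℝ)^2 ≤ ((2:ℝ)^n)^2 := pow_le_pow_left₀ (Nat.cast_nonneg n) h1 2
      _ = 4^n := by rw [← pow_mul, mul_comm, pow_mul]; norm_num
  have hq_le : ∀ δ, 0 < δ → ∀ n : ℕ, (n:ℝ)^2 * p δ n ≤ (4*(ν*δ))^n / Nat.factorial n := by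
    intro δ hδ n
    cases n with
    | zero => simp
    | succ m =>
      calc ((m+1:ℕ):ℝ)^2 * p δ (m+1)
          ≤ 4^(m+1) * ((ν*δ)^(m+1)/Nat.factorial (m+1)) :=
            mul_le_mul (hcast (m+1)) (hpn δ hδ m) (hnonneg δ hδ _) (by positivity)
        _ = (4*(ν*δ))^(m+1) / Nat.factorial (m+1) := by rw [mul_pow]; ring
  have hsumq : ∀ δ, 0 < δ → Summable (fun n : ℕ => (n:ℝ)^2 * p δ n) := fun δ hδ =>
    Summable.of_nonneg_of_le (fun n => mul_nonneg (sq_nonneg _) (hnonneg δ hδ n)) (hq_le δ hδ)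
      (Real.summable_pow_div_factorial _)
  have hrq : ∀ δ, 0 < δ → ∀ n : ℕ, (n:ℝ) * p δ n ≤ (n:ℝ)^2 * p δ n := by
    intro δ hδ n
    apply mul_le_mul_of_nonneg_right _ (hnonneg δ hδ n)
    cases n with
    | zero => simp
    | succ m =>
      have h1 : (1:ℝ) ≤ (m:ℝ) + 1 := by have := Nat.cast_nonneg (α := ℝ) m; linarith
      push_cast
      nlinarith
  have hsumr : ∀ δ, 0 < δ → Summable (fun n : ℕ => (n:ℝ) * p δ n) := fun δ hδ =>
    Summable.of_nonneg_of_le (fun n => mul_nonneg (Nat.cast_nonneg n) (hnonneg δ hδ n))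
      (hrq δ hδ) (hsumq δ hδ)
  -- the constant
  set C : ℝ := ∑' m : ℕ, (4:ℝ)^m / Nat.factorial m with hCdef
  have hCsum : Summable (fun m : ℕ => (4:ℝ)^m / Nat.factorial m) :=
    Real.summable_pow_div_factorial 4
  have hC0 : 0 ≤ C := tsum_nonneg (fun m => by positivity)
  have hCshift : (∑' n : ℕ, (4:ℝ)^(n+2) / Nat.factorial (n+2)) ≤ C := by
    have h := Summable.sum_add_tsum_nat_add 2 hCsum
    have hps : 0 ≤ ∑ i ∈ Finset.range 2, (4:ℝ)^i / Nat.factorial i := by positivity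
    rw [hCdef]; linarith
  -- shifted summabilities
  have hsq2 : ∀ δ, 0 < δ → Summable (fun n : ℕ => ((n:ℝ)+2)^2 * p δ (n+2)) := fun δ hδ =>
    ((summable_nat_add_iff 2).2 (hsumq δ hδ)).congr (fun n => by push_cast; ring)
  have hsr2 : ∀ δ, 0 < δ → Summable (fun n : ℕ => ((n:ℝ)+2) * p δ (n+2)) := fun δ hδ =>
    ((summable_nat_add_iff 2).2 (hsumr δ hδ)).congr (fun n => by push_cast; ring)
  -- decompositions
  have hdec1 : ∀ δ, 0 < δ →
      (∑' n : ℕ, (n:ℝ) * p δ n) = p δ 1 + ∑' n : ℕ, ((n:ℝ)+2) * p δ (n+2) := by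
    intro δ hδ
    rw [← Summable.sum_add_tsum_nat_add 2 (hsumr δ hδ)]
    rw [show (∑ i ∈ Finset.range 2, (i:ℝ) * p δ i) = p δ 1 by
      simp [Finset.sum_range_succ]]
    congr 1
    exact tsum_congr fun n => by push_cast; ring
  have hdec2 : ∀ δ, 0 < δ →
      (∑' n : ℕ, (n:ℝ)^2 * p δ n) = p δ 1 + ∑' n : ℕ, ((n:ℝ)+2)^2 * p δ (n+2) := by
    intro δ hδ
    rw [← Summable.sum_add_tsum_nat_add 2 (hsumq δ hδ)]
    rw [show (∑ i ∈ Finset.range 2, (i:ℝ)^2 * p δ i) = p δ 1 by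
      simp [Finset.sum_range_succ]]
    congr 1
    exact tsum_congr fun n => by push_cast; ring
  -- quantitative bounds on Ioc 0 (1/ν)
  have hR2le : ∀ δ, 0 < δ → ν*δ ≤ 1 →
      (∑' n : ℕ, ((n:ℝ)+2)^2 * p δ (n+2)) ≤ C * ν^2 * (δ*δ) := by
    intro δ hδ hδ1
    have hlam0 : (0:ℝ) ≤ ν*δ := by positivity
    have hterm : ∀ n : ℕ, ((n:ℝ)+2)^2 * p δ (n+2)
        ≤ ((4:ℝ)^(n+2) / Nat.factorial (n+2)) * (ν*δ)^2 := by
      intro n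
      have h1 : ((n:ℝ)+2)^2 * p δ (n+2) ≤ (4*(ν*δ))^(n+2) / Nat.factorial (n+2) := by
        have := hq_le δ hδ (n+2)
        push_cast at this ⊢
        linarith
      have h2 : (ν*δ)^(n+2) ≤ (ν*δ)^2 :=
        pow_le_pow_of_le_one hlam0 hδ1 (by omega)
      calc ((n:ℝ)+2)^2 * p δ (n+2) ≤ (4*(ν*δ))^(n+2) / Nat.factorial (n+2) := h1
        _ = ((4:ℝ)^(n+2) / Nat.factorial (n+2)) * (ν*δ)^(n+2) := by
            rw [mul_pow]; ring
        _ ≤ ((4:ℝ)^(n+2) / Nat.factorial (n+2)) * (ν*δ)^2 :=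
            mul_le_mul_of_nonneg_left h2 (by positivity)
    have hsumR : Summable (fun n : ℕ => ((4:ℝ)^(n+2) / Nat.factorial (n+2)) * (ν*δ)^2) :=
      ((summable_nat_add_iff 2).2 hCsum).mul_right _
    calc (∑' n : ℕ, ((n:ℝ)+2)^2 * p δ (n+2))
        ≤ ∑' n : ℕ, ((4:ℝ)^(n+2) / Nat.factorial (n+2)) * (ν*δ)^2 :=
          Summable.tsum_le_tsum hterm (hsq2 δ hδ) hsumR
      _ = (∑' n : ℕ, (4:ℝ)^(n+2) / Nat.factorial (n+2)) * (ν*δ)^2 := tsum_mul_right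
      _ ≤ C * (ν*δ)^2 := mul_le_mul_of_nonneg_right hCshift (by positivity)
      _ = C * ν^2 * (δ*δ) := by ring
  have hR1le : ∀ δ, 0 < δ →
      (∑' n : ℕ, ((n:ℝ)+2) * p δ (n+2)) ≤ ∑' n : ℕ, ((n:ℝ)+2)^2 * p δ (n+2) := by
    intro δ hδ
    apply Summable.tsum_le_tsum _ (hsr2 δ hδ) (hsq2 δ hδ)
    intro n
    apply mul_le_mul_of_nonneg_right _ (hnonneg δ hδ _)
    nlinarith [Nat.cast_nonneg (α := ℝ) n]
  have hR1nn : ∀ δ, 0 < δ → 0 ≤ ∑' n : ℕ, ((n:ℝ)+2) * p δ (n+2) := fun δ hδ =>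
    tsum_nonneg fun n => mul_nonneg (by positivity) (hnonneg δ hδ _)
  have hR2nn : ∀ δ, 0 < δ → 0 ≤ ∑' n : ℕ, ((n:ℝ)+2)^2 * p δ (n+2) := fun δ hδ =>
    tsum_nonneg fun n => mul_nonneg (by positivity) (hnonneg δ hδ _)
  have hp1le : ∀ δ, 0 < δ → p δ 1 ≤ ν*δ := by
    intro δ hδ
    have := hpn δ hδ 0
    simpa using this
  -- basic little-o fact
  have hδδ : (fun δ : ℝ => δ*δ) =o[l] (fun δ : ℝ => δ) := by
    have h1 : (fun δ : ℝ => δ) =o[l] (fun _ : ℝ => (1:ℝ)) :=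
      (isLittleO_one_iff ℝ).2 (tendsto_id.mono_left nhdsWithin_le_nhds)
    have h2 := h1.mul_isBigO (isBigO_refl (fun δ : ℝ => δ) l)
    simpa using h2
  have hmem : Set.Ioc (0:ℝ) (1/ν) ∈ l := by
    rw [hl]
    exact Ioc_mem_nhdsGT_of_mem ⟨le_refl 0, by positivity⟩
  have hbig : ∀ (f : ℝ → ℝ) (K : ℝ),
      (∀ δ, 0 < δ → ν*δ ≤ 1 → |f δ| ≤ K * (δ*δ)) → f =o[l] fun δ : ℝ => δ := by
    intro f K h
    refine IsBigO.trans_isLittleO ?_ hδδ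
    rw [isBigO_iff]
    refine ⟨K, ?_⟩
    filter_upwards [hmem] with δ hδ
    have hδ0 : 0 < δ := hδ.1
    have hνδ : ν*δ ≤ 1 := by
      have := hδ.2
      rw [le_div_iff₀ hν] at this
      linarith
    have := h δ hδ0 hνδ
    rw [Real.norm_eq_abs, Real.norm_eq_abs, abs_of_nonneg (mul_self_nonneg δ)]
    exact this
  -- little-o of the remainder terms
  have hR2o : (fun δ => ∑' n : ℕ, ((n:ℝ)+2)^2 * p δ (n+2)) =o[l] fun δ : ℝ => δ := by
    apply hbig _ (C * ν^2)
    intro δ hδ hνδ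
    rw [abs_of_nonneg (hR2nn δ hδ)]
    exact hR2le δ hδ hνδ
  have hR1o : (fun δ => ∑' n : ℕ, ((n:ℝ)+2) * p δ (n+2)) =o[l] fun δ : ℝ => δ := by
    apply hbig _ (C * ν^2)
    intro δ hδ hνδ
    rw [abs_of_nonneg (hR1nn δ hδ)]
    exact (hR1le δ hδ).trans (hR2le δ hδ hνδ)
  -- little-o of the squared mean
  have hS1o : (fun δ => (∑' n : ℕ, (n:ℝ) * p δ n)^2) =o[l] fun δ : ℝ => δ := by
    apply hbig _ ((1+C)^2 * ν^2)
    intro δ hδ hνδ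
    have hS1nn : 0 ≤ ∑' n : ℕ, (n:ℝ) * p δ n :=
      tsum_nonneg fun n => mul_nonneg (Nat.cast_nonneg n) (hnonneg δ hδ n)
    have hS1ub : (∑' n : ℕ, (n:ℝ) * p δ n) ≤ (1+C) * (ν*δ) := by
      rw [hdec1 δ hδ]
      have h1 := hp1le δ hδ
      have h2 := (hR1le δ hδ).trans (hR2le δ hδ hνδ)
      have h3 : C * ν^2 * (δ*δ) ≤ C * (ν*δ) := by
        have h4 : 0 ≤ C * (ν*δ) := by positivity
        nlinarith [mul_nonneg h4 (sub_nonneg.2 hνδ)]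
      nlinarith
    rw [abs_of_nonneg (sq_nonneg _)]
    nlinarith
  constructor
  · have hg1 : (fun δ => (∑' n : ℕ, (n:ℝ) * p δ n) - μ * δ) =ᶠ[l]
        (fun δ => (p δ 1 - μ * δ) + ∑' n : ℕ, ((n:ℝ)+2) * p δ (n+2)) := by
      filter_upwards [self_mem_nhdsWithin] with δ hδ
      rw [hdec1 δ hδ]; ring
    exact hg1.trans_isLittleO (hone.add hR1o)
  · have hg2 : (fun δ => ((∑' n : ℕ, (n:ℝ)^2 * p δ n) - (∑' n : ℕ, (n:ℝ) * p δ n)^2) - μ * δ)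
        =ᶠ[l] (fun δ => ((p δ 1 - μ * δ) + ∑' n : ℕ, ((n:ℝ)+2)^2 * p δ (n+2))
          - (∑' n : ℕ, (n:ℝ) * p δ n)^2) := by
      filter_upwards [self_mem_nhdsWithin] with δ hδ
      rw [hdec2 δ hδ]; ring
    exact hg2.trans_isLittleO ((hone.add hR2o).sub hS1o)
end

section
/- Infinitesimal overdispersion with gamma noise: for fixed x ≥ 1, μ > 0, σ > 0, the first-order (in δ) mean of the transition count with probabilities π(n, x, μ, σ) is m₁ = Σ_{n=1}^{x} n·c(n) where c(n) = C(x,n) Σ_{k=0}^{n} C(n,k)(-1)^{n-k+1} σ^{-2} ln(1+σ²μ(x-k)), and the first-order second moment m₂ = Σ_{n=1}^{x} n²·c(n) satisfies m₂ > m₁ whenever x ≥ 2; i.e., the infinitesimal variance exceeds the infinitesimal mean. -/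
open Finset

noncomputable def Dfun (a s : ℝ) (n : ℕ) (y : ℝ) : ℝ :=
  ∑ j ∈ range (n+1), (-1:ℝ)^j * (n.choose j : ℝ) * (Real.log (1 + a*(y+j)) / s)

lemma factor_pos {a : ℝ} (ha : 0 < a) {y : ℝ} (hy : 0 ≤ y) (k : ℕ) :
    0 < 1 + a * (y + k) := by positivity

lemma diff_step (f : ℕ → ℝ) (n : ℕ) :
    ∑ j ∈ range (n+2), (-1:ℝ)^j * ((n+1).choose j : ℝ) * f j
      = (∑ j ∈ range (n+1), (-1:ℝ)^j * (n.choose j : ℝ) * f j)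
        - ∑ j ∈ range (n+1), (-1:ℝ)^j * (n.choose j : ℝ) * f (j+1) := by
  rw [Finset.sum_range_succ' (fun j => (-1:ℝ)^j * ((n+1).choose j : ℝ) * f j) (n+1)]
  have h : ∀ j ∈ range (n+1),
      (-1:ℝ)^(j+1) * ((n+1).choose (j+1) : ℝ) * f (j+1)
        = (-1:ℝ)^(j+1) * (n.choose (j+1) : ℝ) * f (j+1)
          - (-1:ℝ)^j * (n.choose j : ℝ) * f (j+1) := by
    intro j hj
    rw [Nat.choose_succ_succ]
    push_cast
    ring
  rw [Finset.sum_congr rfl h, Finset.sum_sub_distrib]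
  have h2 : (∑ j ∈ range (n+1), (-1:ℝ)^(j+1) * (n.choose (j+1) : ℝ) * f (j+1))
      + (-1:ℝ)^0 * (((n+1).choose 0 : ℕ) : ℝ) * f 0
      = ∑ j ∈ range (n+1), (-1:ℝ)^j * (n.choose j : ℝ) * f j := by
    have := (Finset.sum_range_succ' (fun j => (-1:ℝ)^j * (n.choose j : ℝ) * f j) (n+1)).symm
    simp only [Nat.choose_zero_right] at this ⊢
    rw [this, Finset.sum_range_succ, Nat.choose_succ_self]
    simp
  linarith [h2]

lemma Eform {a : ℝ} (ha : 0 < a) : ∀ (n : ℕ) (y : ℝ), 0 ≤ y →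
    ∑ j ∈ range (n+1), (-1:ℝ)^j * (n.choose j : ℝ) * (a / (1 + a*(y+j)))
      = (n.factorial : ℝ) * a^(n+1) / ∏ k ∈ range (n+1), (1 + a*(y+k)) := by
  intro n
  induction n with
  | zero => intro y hy; simp
  | succ n ih =>
    intro y hy
    have key := diff_step (fun j => a / (1 + a*(y+j))) n
    have h1 : ∀ j ∈ range (n+1), (-1:ℝ)^j * (n.choose j : ℝ) * (a / (1 + a*(y+(j+1:ℕ))))
        = (-1:ℝ)^j * (n.choose j : ℝ) * (a / (1 + a*((y+1)+j))) := by
      intro j hj; push_cast; ring_nf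
    rw [Finset.sum_congr rfl h1] at key
    rw [key, ih y hy, ih (y+1) (by linarith)]
    set P1 := ∏ k ∈ range (n+1), (1 + a*(y+k)) with hP1
    set P2 := ∏ k ∈ range (n+1), (1 + a*((y+1)+k)) with hP2
    have hfull1 : ∏ k ∈ range (n+2), (1 + a*(y+k)) = P1 * (1 + a*(y+(n+1:ℕ))) := by
      rw [Finset.prod_range_succ]
    have hfull2 : ∏ k ∈ range (n+2), (1 + a*(y+k)) = P2 * (1 + a*(y+(0:ℕ))) := by
      rw [Finset.prod_range_succ' (fun k => (1 + a*(y+k))) (n+1)]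
      congr 1
      apply Finset.prod_congr rfl
      intro k hk; push_cast; ring_nf
    have hP1pos : 0 < P1 := Finset.prod_pos fun k _ => factor_pos ha hy k
    have hP2pos : 0 < P2 := Finset.prod_pos fun k _ => factor_pos ha (by linarith : (0:ℝ) ≤ y+1) k
    have hPpos : 0 < ∏ k ∈ range (n+2), (1 + a*(y+k)) :=
      Finset.prod_pos fun k _ => factor_pos ha hy k
    rw [div_sub_div _ _ (ne_of_gt hP1pos) (ne_of_gt hP2pos)]
    rw [div_eq_div_iff (by positivity) (ne_of_gt hPpos), Nat.factorial_succ]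
    push_cast
    have e1 : P1 * (1 + a*(y+((n:ℝ)+1))) = ∏ k ∈ range (n+2), (1 + a*(y+k)) := by
      rw [hfull1]; push_cast; ring
    have e2 : P2 * (1 + a*y) = ∏ k ∈ range (n+2), (1 + a*(y+k)) := by
      rw [hfull2]; push_cast; ring
    linear_combination ((n.factorial : ℝ) * a^(n+1) * P1) * e2 - ((n.factorial : ℝ) * a^(n+1) * P2) * e1

lemma D_hasDeriv {a s : ℝ} (ha : 0 < a) (n : ℕ) {y : ℝ} (hy : 0 ≤ y) :
    HasDerivAt (Dfun a s n)
      ((∑ j ∈ range (n+1), (-1:ℝ)^j * (n.choose j : ℝ) * (a / (1 + a*(y+j)))) / s) y := by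
  have : HasDerivAt (Dfun a s n)
      (∑ j ∈ range (n+1), (-1:ℝ)^j * (n.choose j : ℝ) * ((1 + a*(y+j))⁻¹ * a / s)) y := by
    apply HasDerivAt.fun_sum
    intro j hj
    have h1 : HasDerivAt (fun y : ℝ => 1 + a*(y+j)) a y := by
      simpa using (((hasDerivAt_id y).add_const (j:ℝ)).const_mul a).const_add 1
    have h2 : HasDerivAt (fun y : ℝ => Real.log (1 + a*(y+j))) ((1 + a*(y+j))⁻¹ * a) y :=
      by have := (Real.hasDerivAt_log (ne_of_gt (factor_pos ha hy j))).comp y h1; exact this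
    exact (h2.div_const s).const_mul _
  convert this using 1
  rw [Finset.sum_div]
  apply Finset.sum_congr rfl
  intro j hj
  field_simp

lemma D_strictMonoOn {a s : ℝ} (ha : 0 < a) (hs : 0 < s) (n : ℕ) :
    StrictMonoOn (Dfun a s n) (Set.Ici 0) := by
  apply strictMonoOn_of_deriv_pos (convex_Ici 0)
  · intro y hy
    exact (D_hasDeriv ha n hy).continuousAt.continuousWithinAt
  · intro y hy
    rw [interior_Ici] at hy
    have hy' : (0:ℝ) ≤ y := le_of_lt hy
    rw [(D_hasDeriv (s := s) ha n hy').deriv, Eform ha n y hy']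
    have hp : 0 < ∏ k ∈ range (n+1), (1 + a*(y+k)) :=
      Finset.prod_pos fun k _ => factor_pos ha hy' k
    positivity

lemma D_neg {a s : ℝ} (ha : 0 < a) (hs : 0 < s) (n : ℕ) {y : ℝ} (hy : 0 ≤ y) :
    Dfun a s (n+1) y < 0 := by
  have key : Dfun a s (n+1) y = Dfun a s n y - Dfun a s n (y+1) := by
    have h := diff_step (fun j => Real.log (1 + a*(y+j)) / s) n
    have h1 : ∀ j ∈ range (n+1),
        Real.log (1 + a*(y+((j:ℕ)+1:ℕ))) / s = Real.log (1 + a*((y+1)+j)) / s := by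
      intro j hj
      norm_num
      ring_nf
    unfold Dfun
    rw [h]
    congr 1
    apply Finset.sum_congr rfl
    intro j hj
    rw [h1 j hj]
  rw [key, sub_neg]
  exact D_strictMonoOn ha hs n (Set.mem_Ici.2 hy)
    (Set.mem_Ici.2 (by linarith)) (by linarith)

/-- Infinitesimal overdispersion with gamma noise: for the jump rates
`c(n) = C(x,n) ∑_{k=0}^n C(n,k) (-1)^(n-k+1) σ⁻² ln(1+σ²μ(x-k))` of Theorem A.2,
the first-order second moment exceeds the first-order mean whenever `x ≥ 2`:
`∑_{n=1}^x n² c(n) > ∑_{n=1}^x n c(n)`. -/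
theorem infinitesimal_overdispersion (x : ℕ) (hx : 2 ≤ x) (μ σ : ℝ) (hμ : 0 < μ) (hσ : 0 < σ)
    (c : ℕ → ℝ)
    (hc : ∀ n, c n = (x.choose n : ℝ) * ∑ k ∈ range (n + 1),
        (n.choose k : ℝ) * (-1 : ℝ) ^ (n - k + 1) *
          (Real.log (1 + σ ^ 2 * μ * ((x : ℝ) - k)) / σ ^ 2)) :
    (∑ n ∈ Icc 1 x, (n : ℝ) ^ 2 * c n) > ∑ n ∈ Icc 1 x, (n : ℝ) * c n := by
  set a : ℝ := σ ^ 2 * μ with ha_def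
  have ha : 0 < a := by positivity
  have hs : (0:ℝ) < σ ^ 2 := by positivity
  -- positivity of c n for 1 ≤ n ≤ x
  have hcpos : ∀ n, 1 ≤ n → n ≤ x → 0 < c n := by
    intro n h1 hnx
    rw [hc n]
    have hchoose : (0:ℝ) < (x.choose n : ℝ) := by
      exact_mod_cast Nat.choose_pos hnx
    apply mul_pos hchoose
    have hy : (0:ℝ) ≤ (x:ℝ) - n := by
      have : (n:ℝ) ≤ (x:ℝ) := by exact_mod_cast hnx
      linarith
    have hre : ∑ k ∈ range (n+1),
        (n.choose k : ℝ) * (-1 : ℝ) ^ (n - k + 1) *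
          (Real.log (1 + a * ((x : ℝ) - k)) / σ ^ 2)
        = - Dfun a (σ^2) n ((x:ℝ) - n) := by
      rw [← Finset.sum_range_reflect]
      unfold Dfun
      rw [← Finset.sum_neg_distrib]
      apply Finset.sum_congr rfl
      intro j hj
      have hjn : j ≤ n := by
        have := Finset.mem_range.1 hj; omega
      have e1 : n + 1 - 1 - j = n - j := by omega
      have e2 : n - (n - j) = j := Nat.sub_sub_self hjn
      have e3 : (x:ℝ) - ((n - j : ℕ) : ℝ) = ((x:ℝ) - n) + j := by
        rw [Nat.cast_sub hjn]; ring
      rw [e1, Nat.choose_symm hjn, e2, e3]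
      ring
    rw [hre]
    obtain ⟨m, rfl⟩ : ∃ m, n = m + 1 := ⟨n - 1, by omega⟩
    have := D_neg (s := σ^2) ha hs m hy
    linarith
  -- conclude
  rw [gt_iff_lt, ← sub_pos, ← Finset.sum_sub_distrib]
  apply Finset.sum_pos'
  · intro i hi
    obtain ⟨hi1, hix⟩ := Finset.mem_Icc.1 hi
    have hci := hcpos i hi1 hix
    have hi1' : (1:ℝ) ≤ (i:ℝ) := by exact_mod_cast hi1
    have : (i:ℝ)^2 * c i - (i:ℝ) * c i = (i:ℝ) * ((i:ℝ) - 1) * c i := by ring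
    rw [this]
    apply mul_nonneg (mul_nonneg (by linarith) (by linarith)) (le_of_lt hci)
  · refine ⟨2, Finset.mem_Icc.2 ⟨by norm_num, hx⟩, ?_⟩
    have hc2 := hcpos 2 (by norm_num) hx
    norm_num
    linarith
end

section
/- The coefficients c(n) = C(x,n)·Σ_{k=0}^{n} C(n,k)·(-1)^{n-k+1}·σ^{-2}·ln(1 + σ²μ(x-k)) are strictly positive for every 1 ≤ n ≤ x. -/
open Finset

namespace JumpAux

/-- The product `∏_{j=0}^{m} (1 + a (t+j))`. -/
noncomputable def P (a t : ℝ) (m : ℕ) : ℝ := ∏ j ∈ range (m + 1), (1 + a * (t + j))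

lemma P_pos {a : ℝ} (ha : 0 < a) {t : ℝ} (ht : 0 ≤ t) (m : ℕ) : 0 < P a t m :=
  Finset.prod_pos fun j _ => by positivity

lemma P_succ_left (a t : ℝ) (m : ℕ) : P a t (m + 1) = P a (t + 1) m * (1 + a * t) := by
  rw [P, Finset.prod_range_succ']
  congr 1
  · refine Finset.prod_congr rfl fun j _ => ?_
    push_cast
    ring_nf
  · norm_num

lemma P_succ_right (a t : ℝ) (m : ℕ) :
    P a t (m + 1) = P a t m * (1 + a * (t + ((m : ℝ) + 1))) := by
  rw [P, Finset.prod_range_succ, P]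
  push_cast
  ring_nf

/-- Closed form for iterated forward differences of `y ↦ a (1+ay)⁻¹`. -/
lemma iter_G {a : ℝ} (ha : 0 < a) (m : ℕ) : ∀ t : ℝ, 0 ≤ t →
    (fwdDiff (1:ℝ))^[m] (fun y => a * (1 + a * y)⁻¹) t
      = (-1) ^ m * a ^ (m + 1) * m.factorial / P a t m := by
  induction m with
  | zero =>
    intro t ht
    simp [P, Nat.factorial]
    rw [div_eq_mul_inv]
  | succ m IH =>
    intro t ht
    rw [Function.iterate_succ_apply', fwdDiff, IH (t + 1) (by linarith), IH t ht]
    have hA := P_pos ha (t := t + 1) (by linarith) m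
    have hB := P_pos ha ht m
    have hC := P_pos ha ht (m + 1)
    have h1 : P a t (m + 1) = P a (t + 1) m * (1 + a * t) := P_succ_left a t m
    have h2 : P a t (m + 1) = P a t m * (1 + a * (t + ((m : ℝ) + 1))) := P_succ_right a t m
    rw [div_sub_div _ _ hA.ne' hB.ne', div_eq_div_iff (by positivity) hC.ne']
    push_cast [Nat.factorial_succ]
    set A := P a (t + 1) m
    set B := P a t m
    set C := P a t (m + 1)
    linear_combination
      ((-1) ^ m * a ^ (m + 1) * (m.factorial : ℝ) * B) * h1
        - ((-1) ^ m * a ^ (m + 1) * (m.factorial : ℝ) * A) * h2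

/-- The forward difference of `log (1+ay)` as an integral. -/
lemma fwdDiff_log {a : ℝ} (ha : 0 < a) {s : ℝ} (hs : 0 ≤ s) :
    (fwdDiff (1:ℝ)) (fun y => Real.log (1 + a * y)) s
      = ∫ u in (0:ℝ)..1, a * (1 + a * (s + u))⁻¹ := by
  have key : ∫ u in s..(s + 1), a * (1 + a * u)⁻¹
      = Real.log (1 + a * (s + 1)) - Real.log (1 + a * s) := by
    apply intervalIntegral.integral_eq_sub_of_hasDerivAt
      (f := fun y => Real.log (1 + a * y)) (f' := fun u => a * (1 + a * u)⁻¹)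
    · intro u hu
      rw [Set.uIcc_of_le (by linarith)] at hu
      have h0 : (0:ℝ) < 1 + a * u := by nlinarith [hu.1, hu.2]
      have hd : HasDerivAt (fun y => 1 + a * y) a u := by
        simpa using ((hasDerivAt_id u).const_mul a).const_add 1
      have := hd.log h0.ne'
      simpa [div_eq_mul_inv, mul_comm] using this
    · apply ContinuousOn.intervalIntegrable
      apply ContinuousOn.mul continuousOn_const
      apply ContinuousOn.inv₀
      · fun_prop
      · intro u hu
        rw [Set.uIcc_of_le (by linarith)] at hu
        nlinarith [hu.1, hu.2]
  rw [show (fwdDiff (1:ℝ)) (fun y => Real.log (1 + a * y)) s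
      = Real.log (1 + a * (s + 1)) - Real.log (1 + a * s) from rfl, ← key,
    intervalIntegral.integral_comp_add_left (fun u => a * (1 + a * u)⁻¹) s]
  norm_num

lemma integrable_inv_shift {a : ℝ} (ha : 0 < a) {c : ℝ} (hc : 0 ≤ c) (r : ℝ) :
    IntervalIntegrable (fun u => r * (a * (1 + a * (c + u))⁻¹)) MeasureTheory.volume 0 1 := by
  apply ContinuousOn.intervalIntegrable
  apply ContinuousOn.mul continuousOn_const
  apply ContinuousOn.mul continuousOn_const
  apply ContinuousOn.inv₀
  · fun_prop
  · intro u hu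
    rw [Set.uIcc_of_le (by norm_num)] at hu
    nlinarith [hu.1, hu.2]

/-- Main positivity lemma: `(-1)^m Δ^[m+1] log(1+a·) (t) > 0` for `t ≥ 0`. -/
lemma main {a : ℝ} (ha : 0 < a) (m : ℕ) {t : ℝ} (ht : 0 ≤ t) :
    0 < (-1) ^ m * (fwdDiff (1:ℝ))^[m + 1] (fun y => Real.log (1 + a * y)) t := by
  have e2 : (fwdDiff (1:ℝ))^[m + 1] (fun y => Real.log (1 + a * y)) t
      = ∑ k ∈ range (m + 1), ∫ u in (0:ℝ)..1,
          ((-1 : ℝ) ^ (m - k) * m.choose k) * (a * (1 + a * ((t + (k:ℝ)) + u))⁻¹) := by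
    rw [Function.iterate_succ_apply, fwdDiff_iter_eq_sum_shift]
    refine Finset.sum_congr rfl fun k hk => ?_
    rw [fwdDiff_log ha (s := t + k • (1:ℝ)) (by positivity), zsmul_eq_mul,
      ← intervalIntegral.integral_const_mul]
    apply intervalIntegral.integral_congr
    intro u _
    push_cast
    ring_nf
  have e3 : (fwdDiff (1:ℝ))^[m + 1] (fun y => Real.log (1 + a * y)) t
      = ∫ u in (0:ℝ)..1, (fwdDiff (1:ℝ))^[m] (fun y => a * (1 + a * y)⁻¹) (t + u) := by
    rw [e2, ← intervalIntegral.integral_finset_sum]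
    · apply intervalIntegral.integral_congr
      intro u hu
      rw [Set.uIcc_of_le (by norm_num)] at hu
      dsimp only
      rw [fwdDiff_iter_eq_sum_shift]
      refine Finset.sum_congr rfl fun k hk => ?_
      push_cast [zsmul_eq_mul, nsmul_eq_mul]
      ring_nf
    · intro k hk
      exact integrable_inv_shift ha (by positivity) _
  rw [e3, ← intervalIntegral.integral_const_mul]
  have hcongr : Set.EqOn
      (fun u => (-1:ℝ) ^ m * (fwdDiff (1:ℝ))^[m] (fun y => a * (1 + a * y)⁻¹) (t + u))
      (fun u => a ^ (m + 1) * m.factorial / P a (t + u) m)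
      (Set.uIcc (0:ℝ) 1) := by
    intro u hu
    rw [Set.uIcc_of_le (by norm_num)] at hu
    dsimp only
    rw [iter_G ha m (t + u) (by linarith [hu.1])]
    rw [mul_div_assoc, ← mul_assoc, ← mul_assoc, ← mul_pow]
    norm_num [mul_div_assoc]
  rw [intervalIntegral.integral_congr hcongr]
  apply intervalIntegral.intervalIntegral_pos_of_pos_on
  · apply ContinuousOn.intervalIntegrable
    apply ContinuousOn.div continuousOn_const
    · unfold P
      apply continuousOn_finset_prod
      intro j hj
      fun_prop
    · intro u hu
      rw [Set.uIcc_of_le (by norm_num)] at hu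
      exact (P_pos ha (by linarith [hu.1]) m).ne'
  · intro u hu
    have := P_pos ha (t := t + u) (by linarith [hu.1.le]) m
    positivity
  · norm_num

lemma sign_eq (m k : ℕ) (hk : k ≤ m + 1) :
    (-1:ℝ) ^ m * (-1) ^ (m + 1 - k) = (-1) ^ (k + 1) := by
  have h2 : (-1:ℝ) ^ (m + 1 - k) * (-1) ^ k + (-1) ^ m = 0 := by
    rw [← pow_add, Nat.sub_add_cancel hk, pow_succ]; ring
  have hk2 : (-1:ℝ) ^ k * (-1) ^ k = 1 := by
    rw [← pow_add, ← two_mul, pow_mul]; norm_num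
  have hm2 : (-1:ℝ) ^ m * (-1) ^ m = 1 := by
    rw [← pow_add, ← two_mul, pow_mul]; norm_num
  linear_combination ((-1:ℝ) ^ m * (-1) ^ k) * h2
    - ((-1:ℝ) ^ m * (-1) ^ (m + 1 - k)) * hk2 - ((-1:ℝ) ^ k) * hm2

end JumpAux

/-- The jump rates `c(n) = C(x,n) ∑_{k=0}^n C(n,k) (-1)^(n-k+1) σ⁻² ln(1+σ²μ(x-k))`
of Theorem A.2 are strictly positive for every `1 ≤ n ≤ x`. -/
theorem jump_rates_positive (x : ℕ) (hx : 1 ≤ x) (μ σ : ℝ) (hμ : 0 < μ) (hσ : 0 < σ)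
    (n : ℕ) (hn1 : 1 ≤ n) (hnx : n ≤ x) :
    0 < (x.choose n : ℝ) * ∑ k ∈ range (n + 1),
        (n.choose k : ℝ) * (-1 : ℝ) ^ (n - k + 1) *
          (Real.log (1 + σ ^ 2 * μ * ((x : ℝ) - k)) / σ ^ 2) := by
  obtain ⟨m, rfl⟩ : ∃ m, n = m + 1 := ⟨n - 1, (Nat.succ_pred_eq_of_pos hn1).symm⟩
  set a : ℝ := σ ^ 2 * μ with ha_def
  have ha : 0 < a := by positivity
  set t : ℝ := (x : ℝ) - ((m : ℝ) + 1) with ht_def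
  have ht : 0 ≤ t := by
    rw [ht_def]
    have : ((m:ℝ) + 1) ≤ (x:ℝ) := by exact_mod_cast hnx
    linarith
  have hsum : ∑ k ∈ range (m + 1 + 1),
        ((m+1).choose k : ℝ) * (-1 : ℝ) ^ (m + 1 - k + 1) *
          (Real.log (1 + a * ((x : ℝ) - k)) / σ ^ 2)
      = (σ ^ 2)⁻¹ * ((-1) ^ m *
          (fwdDiff (1:ℝ))^[m + 1] (fun y => Real.log (1 + a * y)) t) := by
    rw [fwdDiff_iter_eq_sum_shift, Finset.mul_sum, Finset.mul_sum,
      ← Finset.sum_range_reflect]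
    refine Finset.sum_congr rfl fun k hk => ?_
    rw [Finset.mem_range] at hk
    have hk' : k ≤ m + 1 := Nat.lt_succ_iff.mp hk
    simp only [Nat.add_sub_cancel]
    rw [Nat.choose_symm hk', Nat.sub_sub_self hk', Nat.cast_sub hk']
    rw [zsmul_eq_mul]
    push_cast
    have hpt : (x:ℝ) - ((m:ℝ) + 1 - (k:ℝ)) = t + k • (1:ℝ) := by
      rw [ht_def]; simp; ring
    rw [hpt, ← JumpAux.sign_eq m k hk']
    push_cast [nsmul_eq_mul]
    ring
  rw [hsum]
  have hpos := JumpAux.main ha m ht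
  have hchoose : 0 < (x.choose (m+1) : ℝ) := by
    exact_mod_cast Nat.choose_pos hnx
  positivity
end
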